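/- Let U = (H ⊗ H ⊗ I_N) · (P₁ ⊗ I₂ ⊗ S₊ + P₀ ⊗ I₂ ⊗ I_N) · (I₂ ⊗ P₀ ⊗ S₋ + I₂ ⊗ P₁ ⊗ I_N) · (Z ⊗ Z ⊗ I_N) · (H ⊗ H ⊗ I_N), indexed by Fin 2 × Fin 2 × Fin N. Then the first column of N×N blocks of U is (L̃₁, D̃₁, D̃₁, Q̃₁): for all j, k ∈ Fin N, U((0,0,j),(0,0,k)) = (L̃₁)_{jk}, U((0,1,j),(0,0,k)) = U((1,0,j),(0,0,k)) = (D̃₁)_{jk}, and U((1,1,j),(0,0,k)) = (Q̃₁)_{jk}, where D̃₁ = (1/4)(S₋ − S₊) (a scaled central finite-difference approximation of d/dx, equal to (h/2)·D₁ with D₁ = (1/(2h))(S₋ − S₊)) and Q̃₁ = (1/2)·I_N + (1/4)(S₊ + S₋) (a scaled trapezoidal quadrature matrix, equal to (1/(2h))·Q₁ with Q₁ = (h/2)(2·I_N + S₊ + S₋)). -/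
import Mathlib


open Matrix Kronecker

noncomputable section

/-- Cyclic shift matrix `S₊`: `(S₊)_{jk} = 1` iff `j ≡ k+1 (mod N)`. -/
def Sp (N : ℕ) [NeZero N] : Matrix (Fin N) (Fin N) ℂ :=
  Matrix.of fun j k => if j = k + 1 then 1 else 0

/-- Cyclic shift matrix `S₋ = S₊ᵀ`. -/
def Sm (N : ℕ) [NeZero N] : Matrix (Fin N) (Fin N) ℂ := (Sp N)ᵀ

def P0 : Matrix (Fin 2) (Fin 2) ℂ := !![1, 0; 0, 0]
def P1 : Matrix (Fin 2) (Fin 2) ℂ := !![0, 0; 0, 1]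
def Hg : Matrix (Fin 2) (Fin 2) ℂ := ((Real.sqrt 2 : ℝ) : ℂ)⁻¹ • !![1, 1; 1, -1]
def Zg : Matrix (Fin 2) (Fin 2) ℂ := !![1, 0; 0, -1]

/-- The normalized discrete 1D periodic Laplacian `L̃₁ = (1/4)(S₊ + S₋) − (1/2)·I_N`. -/
def Lt1 (N : ℕ) [NeZero N] : Matrix (Fin N) (Fin N) ℂ :=
  (1 / 4 : ℂ) • (Sp N + Sm N) - (1 / 2 : ℂ) • (1 : Matrix (Fin N) (Fin N) ℂ)

/-- `D̃₁ = (1/4)(S₋ − S₊)`, a scaled central finite-difference approximation of `d/dx`. -/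
def Dt1 (N : ℕ) [NeZero N] : Matrix (Fin N) (Fin N) ℂ :=
  (1 / 4 : ℂ) • (Sm N - Sp N)

/-- `Q̃₁ = (1/2)·I_N + (1/4)(S₊ + S₋)`, a scaled trapezoidal quadrature matrix. -/
def Qt1 (N : ℕ) [NeZero N] : Matrix (Fin N) (Fin N) ℂ :=
  (1 / 2 : ℂ) • (1 : Matrix (Fin N) (Fin N) ℂ) + (1 / 4 : ℂ) • (Sp N + Sm N)

lemma sp_mul_sm (N : ℕ) [NeZero N] : Sp N * Sm N = 1 := by
  ext j k
  simp only [Sp, Sm, Matrix.mul_apply, Matrix.transpose_apply, Matrix.of_apply,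
    Matrix.one_apply, ite_mul, one_mul, zero_mul]
  have h : ∀ l : Fin N, (j = l + 1) ↔ (l = j - 1) := by
    intro l; constructor <;> intro h <;> subst h <;> simp
  simp only [h]
  rw [Finset.sum_ite_eq' Finset.univ (j - 1) (fun l => if k = l + 1 then (1:ℂ) else 0)]
  simp [sub_add_cancel, eq_comm]

lemma hc2 : ((Real.sqrt 2 : ℝ) : ℂ)⁻¹ * ((Real.sqrt 2 : ℝ) : ℂ)⁻¹ = 1/2 := by
  rw [← mul_inv]
  norm_cast
  rw [Real.mul_self_sqrt (by norm_num)]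
  norm_num

lemma hE0 : Hg * P0 * Zg * Hg = (1/2 : ℂ) • !![1,1;1,1] := by
  rw [Hg, P0, Zg]
  rw [Matrix.smul_mul, Matrix.smul_mul, Matrix.smul_mul, Matrix.mul_smul, smul_smul, hc2]
  congr 1
  ext i j
  fin_cases i <;> fin_cases j <;> simp [Matrix.mul_apply, Fin.sum_univ_two]

lemma hE1 : Hg * P1 * Zg * Hg = (1/2 : ℂ) • !![-1,1;1,-1] := by
  rw [Hg, P1, Zg]
  rw [Matrix.smul_mul, Matrix.smul_mul, Matrix.smul_mul, Matrix.mul_smul, smul_smul, hc2]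
  congr 1
  ext i j
  fin_cases i <;> fin_cases j <;> simp [Matrix.mul_apply, Fin.sum_univ_two]

theorem stmt_3 (n : ℕ) (hn : 1 ≤ n) (N : ℕ) (hN : N = 2 ^ n) [NeZero N]
    (U : Matrix ((Fin 2 × Fin 2) × Fin N) ((Fin 2 × Fin 2) × Fin N) ℂ)
    (hU : U = (Hg ⊗ₖ Hg ⊗ₖ (1 : Matrix (Fin N) (Fin N) ℂ))
      * (P1 ⊗ₖ (1 : Matrix (Fin 2) (Fin 2) ℂ) ⊗ₖ Sp N
          + P0 ⊗ₖ (1 : Matrix (Fin 2) (Fin 2) ℂ) ⊗ₖ (1 : Matrix (Fin N) (Fin N) ℂ))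
      * ((1 : Matrix (Fin 2) (Fin 2) ℂ) ⊗ₖ P0 ⊗ₖ Sm N
          + (1 : Matrix (Fin 2) (Fin 2) ℂ) ⊗ₖ P1 ⊗ₖ (1 : Matrix (Fin N) (Fin N) ℂ))
      * (Zg ⊗ₖ Zg ⊗ₖ (1 : Matrix (Fin N) (Fin N) ℂ))
      * (Hg ⊗ₖ Hg ⊗ₖ (1 : Matrix (Fin N) (Fin N) ℂ))) :
    ∀ j k : Fin N,
      U (((0, 0), j)) (((0, 0), k)) = Lt1 N j k ∧
      U (((0, 1), j)) (((0, 0), k)) = Dt1 N j k ∧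
      U (((1, 0), j)) (((0, 0), k)) = Dt1 N j k ∧
      U (((1, 1), j)) (((0, 0), k)) = Qt1 N j k := by
  have hU2 : U = ((1/2 : ℂ) • !![-1,1;1,-1]) ⊗ₖ ((1/2 : ℂ) • !![(1:ℂ),1;1,1]) ⊗ₖ (1 : Matrix (Fin N) (Fin N) ℂ)
      + ((1/2 : ℂ) • !![-1,1;1,-1]) ⊗ₖ ((1/2 : ℂ) • !![(-1:ℂ),1;1,-1]) ⊗ₖ Sp N
      + ((1/2 : ℂ) • !![(1:ℂ),1;1,1]) ⊗ₖ ((1/2 : ℂ) • !![(1:ℂ),1;1,1]) ⊗ₖ Sm N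
      + ((1/2 : ℂ) • !![(1:ℂ),1;1,1]) ⊗ₖ ((1/2 : ℂ) • !![(-1:ℂ),1;1,-1]) ⊗ₖ (1 : Matrix (Fin N) (Fin N) ℂ) := by
    rw [hU]
    simp only [Matrix.mul_add, Matrix.add_mul, ← Matrix.mul_kronecker_mul,
      Matrix.mul_one, Matrix.one_mul, sp_mul_sm, hE0, hE1]
    abel
  intro j k
  refine ⟨?_, ?_, ?_, ?_⟩ <;>
  · rw [hU2]
    simp [Lt1, Dt1, Qt1, Matrix.add_apply, Matrix.sub_apply, Matrix.smul_apply,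
      Matrix.kroneckerMap_apply, smul_eq_mul, Matrix.of_apply]
    ring
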